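/- Let g = \u03a3_{i\u2265N} x_i t^i \u2208 SL_n(\u2102((t))) with x_N \u2260 0, and suppose g \u2208 SL_n(\u2102[[t]]) t^\u03bb SL_n(\u2102[[t]]) where \u03bb = (a_1 \u2265 a_2 \u2265 ... \u2265 a_n), \u03a3 a_i = 0. Then N = a_n, and the rank of x_N equals the number of indices j with a_j = a_n. -/

import Mathlib

open Matrix

namespace Stmt10Aux

/-- "power series" predicate: no negative coefficients. -/
def Pneg (f : LaurentSeries ℂ) : Prop := ∀ i < (0:ℤ), f.coeff i = 0

lemma Pneg.mul {f h : LaurentSeries ℂ} (hf : Pneg f) (hh : Pneg h) : Pneg (f * h) := by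
  intro i hi
  rw [HahnSeries.coeff_mul]
  apply Finset.sum_eq_zero
  rintro ⟨p, q⟩ hpq
  rw [Finset.mem_antidiagonal] at hpq
  obtain ⟨hp, hq, hs⟩ := hpq
  rcases lt_or_ge p 0 with h1 | h1
  · rw [hf p h1, zero_mul]
  rcases lt_or_ge q 0 with h2 | h2
  · rw [hh q h2, mul_zero]
  exfalso; omega

lemma coeff0_mul {f h : LaurentSeries ℂ} (hf : Pneg f) (hh : Pneg h) :
    (f * h).coeff 0 = f.coeff 0 * h.coeff 0 := by
  rw [HahnSeries.coeff_mul]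
  have hsub : Finset.antidiagonal f.isPWO_support h.isPWO_support 0 ⊆ {((0:ℤ), (0:ℤ))} := by
    rintro ⟨p, q⟩ hpq
    rw [Finset.mem_antidiagonal] at hpq
    obtain ⟨hp, hq, hs⟩ := hpq
    have h1 : 0 ≤ p := le_of_not_gt fun hc => hp (hf p hc)
    have h2 : 0 ≤ q := le_of_not_gt fun hc => hq (hh q hc)
    simp only [Finset.mem_singleton, Prod.ext_iff]
    constructor <;> omega
  rw [Finset.sum_subset hsub, Finset.sum_singleton]
  rintro ⟨p, q⟩ hp hnp
  simp only [Finset.mem_singleton, Prod.ext_iff] at hp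
  obtain ⟨rfl, rfl⟩ : p = 0 ∧ q = 0 := by exact_mod_cast hp
  rw [Finset.mem_antidiagonal] at hnp
  push_neg at hnp
  by_cases hf0 : f.coeff 0 = 0
  · rw [hf0, zero_mul]
  · have := hnp hf0
    rcases Classical.em ((0:ℤ) ∈ h.support) with hmem | hmem
    · exact absurd (by simp) (this hmem)
    · rw [HahnSeries.mem_support, not_not] at hmem
      rw [hmem, mul_zero]

lemma triple_coeff (f h : LaurentSeries ℂ) (c i : ℤ) :
    (f * HahnSeries.single c (1:ℂ) * h).coeff i = (f * h).coeff (i - c) := by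
  have heq : f * HahnSeries.single c (1:ℂ) * h = HahnSeries.single c (1:ℂ) * (f * h) := by ring
  rw [heq]
  have h2 : ((HahnSeries.single c (1:ℂ)) * (f * h)).coeff ((i - c) + c)
      = 1 * (f * h).coeff (i - c) := HahnSeries.coeff_single_mul_add
  rw [show i - c + c = i by ring] at h2
  rw [h2, one_mul]

/-- coefficient extraction as an additive hom -/
def coeffHom (i : ℤ) : LaurentSeries ℂ →+ ℂ where
  toFun f := f.coeff i
  map_zero' := HahnSeries.coeff_zero
  map_add' _ _ := HahnSeries.coeff_add

lemma Pneg.one : Pneg 1 := by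
  intro i hi
  rw [HahnSeries.coeff_one, if_neg (by omega)]

lemma Pneg.prod {ι : Type*} {s : Finset ι} {f : ι → LaurentSeries ℂ}
    (h : ∀ j ∈ s, Pneg (f j)) : Pneg (∏ j ∈ s, f j) := by
  classical
  induction s using Finset.induction with
  | empty => simpa using Pneg.one
  | @insert a s ha ih =>
    rw [Finset.prod_insert ha]
    exact (h a (Finset.mem_insert_self a s)).mul
      (ih fun j hj => h j (Finset.mem_insert_of_mem hj))

lemma coeff0_prod {ι : Type*} {s : Finset ι} {f : ι → LaurentSeries ℂ}
    (h : ∀ j ∈ s, Pneg (f j)) :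
    (∏ j ∈ s, f j).coeff 0 = ∏ j ∈ s, (f j).coeff 0 := by
  classical
  induction s using Finset.induction with
  | empty => simp [HahnSeries.coeff_one]
  | @insert a s ha ih =>
    rw [Finset.prod_insert ha, Finset.prod_insert ha,
      coeff0_mul (h a (Finset.mem_insert_self a s))
        (Pneg.prod fun j hj => h j (Finset.mem_insert_of_mem hj)),
      ih fun j hj => h j (Finset.mem_insert_of_mem hj)]

lemma coeff0_det {n : ℕ} (A : Matrix (Fin n) (Fin n) (LaurentSeries ℂ))
    (hA : ∀ k l, Pneg (A k l)) :
    (A.det).coeff 0 = (Matrix.of fun k l => (A k l).coeff 0).det := by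
  rw [Matrix.det_apply, Matrix.det_apply]
  have : (∑ σ : Equiv.Perm (Fin n), Equiv.Perm.sign σ • ∏ i, A (σ i) i).coeff 0
      = coeffHom 0 (∑ σ : Equiv.Perm (Fin n), Equiv.Perm.sign σ • ∏ i, A (σ i) i) := rfl
  rw [this, map_sum]
  apply Finset.sum_congr rfl
  intro σ _
  rw [show (Equiv.Perm.sign σ • ∏ i, A (σ i) i) = ((Equiv.Perm.sign σ : ℤ) • ∏ i, A (σ i) i) from
    rfl, map_zsmul]
  congr 1
  exact coeff0_prod fun j _ => hA _ _

end Stmt10Aux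

open Stmt10Aux

/-- Let `g = Σ_{i ≥ N} x_i t^i ∈ SL_n(ℂ((t)))` with `x_N ≠ 0`, and suppose
`g ∈ SL_n(ℂ[[t]]) t^λ SL_n(ℂ[[t]])` where `λ = (a_1 ≥ ... ≥ a_n)`, `Σ a_i = 0`.  Then
`N = a_n`, and the rank of `x_N` equals the number of indices `j` with `a_j = a_n`. -/
theorem stmt10 (n : ℕ) (hn : 0 < n) (N : ℤ)
    (g : Matrix (Fin n) (Fin n) (LaurentSeries ℂ))
    (hdet : g.det = 1)
    (x : ℤ → Matrix (Fin n) (Fin n) ℂ)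
    (hx : ∀ (i : ℤ) (k l : Fin n), x i k l = (g k l).coeff i)
    (hlow : ∀ i < N, x i = 0) (hN : x N ≠ 0)
    (lam : Fin n → ℤ)
    (hdom : ∀ i j : Fin n, i ≤ j → lam j ≤ lam i)
    (hsum : ∑ i, lam i = 0)
    (hmem : ∃ A B : Matrix (Fin n) (Fin n) (LaurentSeries ℂ),
      (∀ k l : Fin n, ∀ i < (0 : ℤ), (A k l).coeff i = 0) ∧ A.det = 1 ∧
      (∀ k l : Fin n, ∀ i < (0 : ℤ), (B k l).coeff i = 0) ∧ B.det = 1 ∧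
      g = A * Matrix.diagonal (fun j => (HahnSeries.single (lam j) (1 : ℂ))) * B) :
    N = lam ⟨n - 1, by omega⟩ ∧
      (x N).rank =
        (Finset.univ.filter (fun j : Fin n => lam j = lam ⟨n - 1, by omega⟩)).card := by
  classical
  obtain ⟨A, B, hA, hAdet, hB, hBdet, hg⟩ := hmem
  set jn : Fin n := ⟨n - 1, by omega⟩ with hjn
  set m : ℤ := lam jn with hmdef
  have hm : ∀ j, m ≤ lam j := by
    intro j
    apply hdom j jn
    have : j.val ≤ n - 1 := by omega
    exact this
  have hAp : ∀ k l, Pneg (A k l) := fun k l => hA k l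
  have hBp : ∀ k l, Pneg (B k l) := fun k l => hB k l
  -- entrywise coefficient formula
  have hgentry : ∀ (k l : Fin n) (i : ℤ),
      (g k l).coeff i = ∑ j, (A k j * B j l).coeff (i - lam j) := by
    intro k l i
    rw [hg, Matrix.mul_apply]
    have hrw : ∀ j : Fin n,
        (A * Matrix.diagonal fun j => HahnSeries.single (lam j) (1:ℂ)) k j
          = A k j * HahnSeries.single (lam j) (1:ℂ) := fun j => Matrix.mul_diagonal ..
    have : (∑ j, (A * Matrix.diagonal fun j => HahnSeries.single (lam j) (1:ℂ)) k j * B j l)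
        = ∑ j, A k j * HahnSeries.single (lam j) (1:ℂ) * B j l := by
      exact Finset.sum_congr rfl fun j _ => by rw [hrw j]
    rw [this]
    rw [show ((∑ j, A k j * HahnSeries.single (lam j) (1:ℂ) * B j l).coeff i)
        = coeffHom i (∑ j, A k j * HahnSeries.single (lam j) (1:ℂ) * B j l) from rfl, map_sum]
    exact Finset.sum_congr rfl fun j _ => triple_coeff (A k j) (B j l) (lam j) i
  -- vanishing below m
  have hlt : ∀ i < m, x i = 0 := by
    intro i hi
    ext k l
    rw [hx i k l, hgentry]
    simp only [Matrix.zero_apply]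
    apply Finset.sum_eq_zero
    intro j _
    exact (hAp k j).mul (hBp j l) _ (by have := hm j; omega)
  -- matrices of constant terms
  set A0 : Matrix (Fin n) (Fin n) ℂ := Matrix.of fun k l => (A k l).coeff 0 with hA0
  set B0 : Matrix (Fin n) (Fin n) ℂ := Matrix.of fun k l => (B k l).coeff 0 with hB0
  set d : Fin n → ℂ := fun j => if lam j = m then 1 else 0 with hd
  have hxm : x m = A0 * Matrix.diagonal d * B0 := by
    ext k l
    rw [hx m k l, hgentry, Matrix.mul_apply]
    apply Finset.sum_congr rfl
    intro j _
    rw [Matrix.mul_diagonal]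
    by_cases hj : lam j = m
    · rw [hj, sub_self, coeff0_mul (hAp k j) (hBp j l)]
      simp [hd, hj, A0, B0]
    · rw [(hAp k j).mul (hBp j l) _ (by have := hm j; omega)]
      simp [hd, hj]
  have hA0det : A0.det = 1 := by
    have := coeff0_det A hAp
    rw [hAdet, HahnSeries.coeff_one, if_pos rfl] at this
    exact this.symm
  have hB0det : B0.det = 1 := by
    have := coeff0_det B hBp
    rw [hBdet, HahnSeries.coeff_one, if_pos rfl] at this
    exact this.symm
  have hcard : (Matrix.diagonal d).rank
      = (Finset.univ.filter (fun j : Fin n => lam j = m)).card := by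
    rw [Matrix.rank_diagonal, Fintype.card_subtype]
    congr 1
    ext j
    simp [hd]
  have hrank : (x m).rank = (Finset.univ.filter (fun j : Fin n => lam j = m)).card := by
    rw [hxm, Matrix.rank_mul_eq_left_of_isUnit_det B0 _ (by rw [hB0det]; exact isUnit_one),
      Matrix.rank_mul_eq_right_of_isUnit_det A0 _ (by rw [hA0det]; exact isUnit_one), hcard]
  have hcardpos : 0 < (Finset.univ.filter (fun j : Fin n => lam j = m)).card := by
    apply Finset.card_pos.mpr
    exact ⟨jn, by simp [hmdef]⟩
  have hxmne : x m ≠ 0 := by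
    intro h0
    rw [h0, Matrix.rank_zero] at hrank
    omega
  have hNm : N = m := by
    rcases lt_trichotomy N m with h | h | h
    · exact absurd (hlt N h) hN
    · exact h
    · exact absurd (hlow m h) hxmne
  refine ⟨hNm, ?_⟩
  rw [hNm]
  exact hrank
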